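/- For every x > 3, f(x) < 0.3; consequently, since sup_{x≥0} f(x) ≥ 0.346, the supremum of f over [0,∞) equals the supremum of f over [0,3]. -/

import Mathlib

open Real MeasureTheory Finset

/-- Density of the standard normal distribution. -/
noncomputable def stdPdf (x : ℝ) : ℝ := Real.exp (-x ^ 2 / 2) / Real.sqrt (2 * Real.pi)

/-- Cumulative distribution function of the standard normal distribution. -/
noncomputable def stdCdf (x : ℝ) : ℝ := ∫ t in Set.Iic x, stdPdf t

/-- The Mills ratio. -/
noncomputable def mills (x : ℝ) : ℝ := (1 - stdCdf x) / stdPdf x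

/-- The function `f(x) = x - x² M(x)`. -/
noncomputable def fMills (x : ℝ) : ℝ := x - x ^ 2 * mills x

/-- `μ`, the supremum of `f` over `[0, ∞)`. -/
noncomputable def muMills : ℝ := sSup (fMills '' Set.Ici 0)

/-- The probability simplex. -/
def probSimplex (n : ℕ) : Set (Fin n → ℝ) :=
  {p | (∀ i, 0 ≤ p i) ∧ ∑ i, p i = 1}

/-- The positive probability simplex. -/
def probSimplexPos (n : ℕ) : Set (Fin n → ℝ) :=
  {p | (∀ i, 0 < p i) ∧ ∑ i, p i = 1}

/-- Expected number of connected components of Ross's random graph. -/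
noncomputable def EC {n : ℕ} (p : Fin n → ℝ) : ℝ :=
  ∑ S ∈ (Finset.univ : Finset (Fin n)).powerset.filter (fun S => S.Nonempty),
    (S.card - 1).factorial * ∏ j ∈ S, p j

/-- The total variation distance. -/
noncomputable def TV {n : ℕ} (p q : Fin n → ℝ) : ℝ := (∑ i, |p i - q i|) / 2

/-- The decreasing rearrangement of a vector. -/
noncomputable def decRearrange {n : ℕ} (x : Fin n → ℝ) : Fin n → ℝ :=
  fun j => x (Tuple.sort x j.rev)

/-- `Majorizes x y` means `x ≻ y`. -/
def Majorizes {n : ℕ} (x y : Fin n → ℝ) : Prop :=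
  (∀ k : ℕ, ∑ j ∈ Finset.univ.filter (fun j : Fin n => (j : ℕ) < k), decRearrange y j
      ≤ ∑ j ∈ Finset.univ.filter (fun j : Fin n => (j : ℕ) < k), decRearrange x j)
  ∧ ∑ j, x j = ∑ j, y j

/-- The coefficients `c_{k,m}`. -/
noncomputable def ckm (m k : ℕ) : ℝ := (m.choose k) * (k + 1).factorial / (m : ℝ) ^ k

/-- The sum `S_m(s)`. -/
noncomputable def Sm (m : ℕ) (s : ℝ) : ℝ := ∑ k ∈ Finset.Icc 1 m, ckm m k * (1 - s) ^ (k - 1)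

/-- The quantity `B_m(s)`. -/
noncomputable def Bm (m : ℕ) (s : ℝ) : ℝ := s * ∑ k ∈ Finset.Icc 1 m, ckm m k * (1 - s) ^ k


section FMillsHelpers

open Set Filter

private lemma sqrt2pi_pos' : 0 < Real.sqrt (2 * Real.pi) :=
  Real.sqrt_pos.2 (by positivity)

private lemma stdPdf_pos' (x : ℝ) : 0 < stdPdf x := div_pos (Real.exp_pos _) sqrt2pi_pos'

private lemma stdPdf_eq' (x : ℝ) : stdPdf x = Real.exp (-(1/2) * x ^ 2) / Real.sqrt (2 * Real.pi) := by
  rw [stdPdf]; ring_nf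

private lemma integrable_stdPdf' : Integrable stdPdf := by
  have h : Integrable fun x : ℝ => Real.exp (-(1/2) * x ^ 2) :=
    integrable_exp_neg_mul_sq (by norm_num)
  have := h.div_const (Real.sqrt (2 * Real.pi))
  exact this.congr (by filter_upwards with x using (stdPdf_eq' x).symm)

private lemma integral_stdPdf' : ∫ x, stdPdf x = 1 := by
  simp_rw [stdPdf_eq']
  rw [MeasureTheory.integral_div, integral_gaussian]
  rw [div_eq_one_iff_eq (by positivity)]
  congr 1
  rw [div_div_eq_mul_div, mul_comm]
  norm_num

private lemma stdPdf_even' (x : ℝ) : stdPdf (-x) = stdPdf x := by simp [stdPdf]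

private lemma stdPdf_continuous' : Continuous stdPdf := by
  unfold stdPdf; fun_prop

private lemma one_sub_stdCdf' (x : ℝ) : 1 - stdCdf x = ∫ t in Set.Ioi x, stdPdf t := by
  have := intervalIntegral.integral_Iic_add_Ioi (b := x) integrable_stdPdf'.integrableOn
    integrable_stdPdf'.integrableOn
  rw [integral_stdPdf'] at this
  rw [stdCdf]; linarith

private lemma stdCdf_zero' : stdCdf 0 = 1 / 2 := by
  have h1 : stdCdf 0 = ∫ t in Set.Ioi (0:ℝ), stdPdf t := by
    rw [stdCdf, show (0:ℝ) = -0 by norm_num, ← _root_.integral_comp_neg_Iic]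
    simp [stdPdf_even']
  have h2 := one_sub_stdCdf' 0
  linarith [h1 ▸ h2]

private lemma hasDeriv_h' (t : ℝ) :
    HasDerivAt (fun s => -(s * stdPdf s / (s ^ 2 + 1)))
      (stdPdf t - 2 * stdPdf t / (t ^ 2 + 1) ^ 2) t := by
  have hne : (t:ℝ) ^ 2 + 1 ≠ 0 := by positivity
  have he : HasDerivAt (fun t : ℝ => Real.exp (-t ^ 2 / 2)) (-t * Real.exp (-t ^ 2 / 2)) t := by
    have h1 : HasDerivAt (fun t : ℝ => -t ^ 2 / 2) (-t) t := by
      have := ((hasDerivAt_pow 2 t).neg.div_const 2)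
      exact this.congr_deriv (by norm_num; ring)
    simpa [mul_comm] using h1.exp
  have hnum : HasDerivAt (fun t : ℝ => t * Real.exp (-t ^ 2 / 2))
      (1 * Real.exp (-t ^ 2 / 2) + t * (-t * Real.exp (-t ^ 2 / 2))) t :=
    (hasDerivAt_id t).mul he
  have hden : HasDerivAt (fun t : ℝ => t ^ 2 + 1) (2 * t ^ 1) t := by
    simpa using (hasDerivAt_pow 2 t).add_const 1
  have hd := ((hnum.div hden hne).div_const (Real.sqrt (2 * Real.pi))).neg
  have hfun : (fun s => -(s * stdPdf s / (s ^ 2 + 1)))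
      = fun s => -(s * Real.exp (-s ^ 2 / 2) / (s ^ 2 + 1) / Real.sqrt (2 * Real.pi)) := by
    funext s; unfold stdPdf; ring
  rw [hfun]
  refine hd.congr_deriv ?_
  unfold stdPdf
  have h2 : Real.sqrt (2 * Real.pi) ≠ 0 := ne_of_gt sqrt2pi_pos'
  field_simp
  ring

private lemma stdPdf_tendsto_zero' : Tendsto stdPdf atTop (nhds 0) := by
  have h1 : Tendsto (fun t : ℝ => -t ^ 2 / 2) atTop atBot := by
    apply Tendsto.atBot_div_const (by norm_num : (0:ℝ) < 2)
    exact tendsto_neg_atBot_iff.mpr (tendsto_pow_atTop two_ne_zero)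
  have := (Real.tendsto_exp_atBot.comp h1).div_const (Real.sqrt (2 * Real.pi))
  rw [zero_div] at this
  exact this.congr (fun t => by simp [stdPdf, Function.comp])

private lemma mills_lb' (x : ℝ) :
    x * stdPdf x / (x ^ 2 + 1) ≤ ∫ t in Set.Ioi x, stdPdf t := by
  set q : ℝ → ℝ := fun t => 2 * stdPdf t / (t ^ 2 + 1) ^ 2 with hq
  set g : ℝ → ℝ := fun t => stdPdf t - q t with hg
  have hqcont : Continuous q := by
    unfold q
    apply Continuous.div (continuous_const.mul stdPdf_continuous') (by fun_prop)
    intro t; positivity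
  have hqint : IntegrableOn q (Set.Ioi x) := by
    apply Integrable.mono' ((integrable_stdPdf'.const_mul 2).integrableOn)
      (hqcont.aestronglyMeasurable.restrict)
    filter_upwards with t
    have h1 : (1:ℝ) ≤ (t ^ 2 + 1) ^ 2 := by nlinarith [sq_nonneg t]
    have h2 : 0 < stdPdf t := stdPdf_pos' t
    rw [Real.norm_eq_abs, abs_of_nonneg (by positivity)]
    rw [div_le_iff₀ (by positivity)]
    nlinarith
  have hgint : IntegrableOn g (Set.Ioi x) :=
    integrable_stdPdf'.integrableOn.sub hqint
  have htend : Tendsto (fun s => -(s * stdPdf s / (s ^ 2 + 1))) atTop (nhds 0) := by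
    apply squeeze_zero_norm' _ stdPdf_tendsto_zero'
    filter_upwards [eventually_ge_atTop (0:ℝ)] with t ht
    have h2 : 0 < stdPdf t := stdPdf_pos' t
    rw [norm_neg, Real.norm_eq_abs, abs_of_nonneg (by positivity)]
    rw [div_le_iff₀ (by positivity)]
    nlinarith [sq_nonneg t, sq_nonneg (t-1)]
  have key : ∫ t in Set.Ioi x, g t = x * stdPdf x / (x ^ 2 + 1) := by
    have := MeasureTheory.integral_Ioi_of_hasDerivAt_of_tendsto'
      (f := fun s => -(s * stdPdf s / (s ^ 2 + 1)))
      (f' := g) (a := x) (m := 0)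
      (fun t _ => hasDeriv_h' t) hgint htend
    rw [this]; ring
  have hsplit : ∫ t in Set.Ioi x, stdPdf t
      = (∫ t in Set.Ioi x, g t) + ∫ t in Set.Ioi x, q t := by
    rw [← MeasureTheory.integral_add hgint hqint]
    congr 1; funext t; simp [hg]
  have hqnn : 0 ≤ ∫ t in Set.Ioi x, q t := by
    apply MeasureTheory.integral_nonneg
    intro t
    have := stdPdf_pos' t
    positivity
  rw [hsplit, key]
  linarith

private lemma exp_neg_lb' {y : ℝ} (h0 : 0 ≤ y) (h1 : y ≤ 1) :
    1 - y + y ^ 2 / 2 - y ^ 3 / 6 + y ^ 4 / 24 - y ^ 5 / 120 - 7 * y ^ 6 / 4320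
      ≤ Real.exp (-y) := by
  have hb := Real.exp_bound (x := -y)
    (by rw [abs_neg, abs_of_nonneg h0]; exact h1) (n := 6) (by norm_num)
  rw [abs_neg, abs_of_nonneg h0] at hb
  have hs : ∑ m ∈ Finset.range 6, (-y) ^ m / (m.factorial : ℝ)
      = 1 - y + y ^ 2 / 2 - y ^ 3 / 6 + y ^ 4 / 24 - y ^ 5 / 120 := by
    simp [Finset.sum_range_succ, Nat.factorial]
    ring
  rw [hs] at hb
  have h2 := (abs_le.1 hb).1
  norm_num [Nat.factorial] at h2
  linarith

private lemma sqrt2pi_ub' : Real.sqrt (2 * Real.pi) ≤ 2506629 / 1000000 := by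
  rw [show (2506629 / 1000000 : ℝ) = Real.sqrt ((2506629 / 1000000) ^ 2) by
    rw [Real.sqrt_sq (by norm_num)]]
  apply Real.sqrt_le_sqrt
  nlinarith [Real.pi_lt_d2, Real.pi_lt_d6]

private noncomputable def Qa (t : ℝ) : ℝ :=
  t - t ^ 3 / 6 + t ^ 5 / 40 - t ^ 7 / 336 + t ^ 9 / 3456 - t ^ 11 / 42240
    - 7 * t ^ 13 / 3594240

private noncomputable def Pa (t : ℝ) : ℝ :=
  1 - t ^ 2 / 2 + t ^ 4 / 8 - t ^ 6 / 48 + t ^ 8 / 384 - t ^ 10 / 3840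
    - 7 * t ^ 12 / 276480

private lemma hasDerivAt_Qa' (t : ℝ) : HasDerivAt Qa (Pa t) t := by
  have h1 := hasDerivAt_id t
  have h3 := (hasDerivAt_pow 3 t).div_const 6
  have h5 := (hasDerivAt_pow 5 t).div_const 40
  have h7 := (hasDerivAt_pow 7 t).div_const 336
  have h9 := (hasDerivAt_pow 9 t).div_const 3456
  have h11 := (hasDerivAt_pow 11 t).div_const 42240
  have h13 := ((hasDerivAt_pow 13 t).const_mul 7).div_const 3594240
  have := (((((h1.sub h3).add h5).sub h7).add h9).sub h11).sub h13
  refine this.congr_deriv ?_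
  unfold Pa
  push_cast
  ring

private lemma J_lb' : Qa (29 / 25) ≤ ∫ t in (0:ℝ)..(29 / 25), Real.exp (-t ^ 2 / 2) := by
  have hint : ∫ t in (0:ℝ)..(29 / 25), Pa t = Qa (29 / 25) := by
    rw [intervalIntegral.integral_eq_sub_of_hasDerivAt
      (fun t _ => hasDerivAt_Qa' t)
      ((Continuous.intervalIntegrable (by unfold Pa; fun_prop) _ _))]
    norm_num [Qa]
  rw [← hint]
  apply intervalIntegral.integral_mono_on (by norm_num)
    (Continuous.intervalIntegrable (by unfold Pa; fun_prop) _ _)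
    (Continuous.intervalIntegrable (by fun_prop) _ _)
  intro t ht
  obtain ⟨ht0, ht1⟩ := ht
  have hy0 : 0 ≤ t ^ 2 / 2 := by positivity
  have hy1 : t ^ 2 / 2 ≤ 1 := by nlinarith
  have hlb := exp_neg_lb' hy0 hy1
  have heq : -(t ^ 2 / 2) = -t ^ 2 / 2 := by ring
  rw [heq] at hlb
  calc Pa t ≤ 1 - t ^ 2 / 2 + (t ^ 2 / 2) ^ 2 / 2 - (t ^ 2 / 2) ^ 3 / 6
        + (t ^ 2 / 2) ^ 4 / 24 - (t ^ 2 / 2) ^ 5 / 120 - 7 * (t ^ 2 / 2) ^ 6 / 4320 := by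
        apply le_of_eq; unfold Pa; ring
    _ ≤ Real.exp (-t ^ 2 / 2) := hlb

private lemma fMills_witness' : (0.346 : ℝ) ≤ fMills (29 / 25) := by
  have hs0 : 0 < Real.sqrt (2 * Real.pi) := sqrt2pi_pos'
  set s := Real.sqrt (2 * Real.pi) with hs
  set J := ∫ t in (0:ℝ)..(29 / 25), Real.exp (-t ^ 2 / 2) with hJdef
  have hI : ∫ t in (0:ℝ)..(29 / 25), stdPdf t = J / s := by
    rw [hJdef, ← intervalIntegral.integral_div]
    rw [hs, Real.sqrt_mul (by norm_num : (0:ℝ) ≤ 2)]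
    simp [stdPdf, Real.sqrt_mul (by norm_num : (0:ℝ) ≤ 2)]
  have hcdf : stdCdf (29 / 25) = 1 / 2 + J / s := by
    have h := intervalIntegral.integral_Iic_sub_Iic (μ := volume) (f := stdPdf)
      (a := (0:ℝ)) (b := (29 / 25 : ℝ))
      integrable_stdPdf'.integrableOn integrable_stdPdf'.integrableOn
    rw [hI] at h
    have h0 : (∫ t in Set.Iic (0:ℝ), stdPdf t) = 1 / 2 := stdCdf_zero'
    rw [h0] at h
    rw [stdCdf]
    linarith
  set E := Real.exp (-(29 / 25 : ℝ) ^ 2 / 2) with hEdef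
  have hE0 : 0 < E := Real.exp_pos _
  have hElb : (0.51001 : ℝ) ≤ E := by
    have h := exp_neg_lb' (y := 841 / 1250) (by norm_num) (by norm_num)
    have heq : (-(841 / 1250 : ℝ)) = -(29 / 25 : ℝ) ^ 2 / 2 := by norm_num
    rw [heq] at h
    rw [hEdef]
    refine le_trans ?_ h
    norm_num
  have hJlb : (0.944913 : ℝ) ≤ J := by
    refine le_trans ?_ J_lb'
    unfold Qa
    norm_num
  have hsub : s ≤ 2506629 / 1000000 := sqrt2pi_ub'
  have hpdf : stdPdf (29 / 25) = E / s := rfl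
  have hmills : mills (29 / 25) = (s / 2 - J) / E := by
    unfold mills
    rw [hcdf, hpdf]
    rw [div_eq_div_iff (by positivity) (ne_of_gt hE0)]
    field_simp
    ring
  have hkey : (29 / 25 : ℝ) ^ 2 * (s / 2 - J) ≤ ((29 / 25 : ℝ) - 0.346) * E := by
    have h1 : (29 / 25 : ℝ) ^ 2 * (s / 2 - J)
        ≤ (29 / 25 : ℝ) ^ 2 * (2506629 / 2000000 - 0.944913) := by
      apply mul_le_mul_of_nonneg_left _ (by positivity)
      linarith
    have h2 : ((29 / 25 : ℝ) - 0.346) * 0.51001 ≤ ((29 / 25 : ℝ) - 0.346) * E := by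
      apply mul_le_mul_of_nonneg_left hElb (by norm_num)
    nlinarith
  unfold fMills
  rw [hmills]
  have hfin : (29 / 25 : ℝ) ^ 2 * ((s / 2 - J) / E) ≤ 29 / 25 - 0.346 := by
    rw [mul_div_assoc', div_le_iff₀ hE0]
    linarith [hkey]
  linarith

private lemma fMills_le' (x : ℝ) : fMills x ≤ x / (x ^ 2 + 1) := by
  have hm := mills_lb' x
  have hp := stdPdf_pos' x
  rw [← one_sub_stdCdf' x] at hm
  have h4 : x / (x ^ 2 + 1) ≤ (1 - stdCdf x) / stdPdf x := by
    rw [div_le_div_iff₀ (by positivity) hp]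
    rw [div_le_iff₀ (by positivity)] at hm
    linarith
  have h5 : x ^ 2 * (x / (x ^ 2 + 1)) ≤ x ^ 2 * ((1 - stdCdf x) / stdPdf x) :=
    mul_le_mul_of_nonneg_left h4 (by positivity)
  have h6 : x - x ^ 2 * (x / (x ^ 2 + 1)) = x / (x ^ 2 + 1) := by
    field_simp
    ring
  unfold fMills mills
  linarith

end FMillsHelpers

/-- For `x > 3` we have `f(x) < 0.3`; since `sup f ≥ 0.346`, the supremum of `f`
over `[0, ∞)` equals its supremum over `[0, 3]`. -/
theorem fMills_sup_on_compact :
    (∀ x : ℝ, 3 < x → fMills x < 0.3) ∧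
    0.346 ≤ sSup (fMills '' Set.Ici 0) ∧
    sSup (fMills '' Set.Ici 0) = sSup (fMills '' Set.Icc 0 3) := by
  have h1 : ∀ x : ℝ, 3 < x → fMills x < 0.3 := by
    intro x hx
    have hle := fMills_le' x
    have h2 : x / (x ^ 2 + 1) < 0.3 := by
      rw [div_lt_iff₀ (by positivity)]
      nlinarith
    linarith
  have hbdd : BddAbove (fMills '' Set.Ici 0) := by
    refine ⟨1/2, ?_⟩
    rintro y ⟨x, hx, rfl⟩
    have hle := fMills_le' x
    have h2 : x / (x ^ 2 + 1) ≤ 1/2 := by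
      rw [div_le_iff₀ (by positivity)]
      nlinarith [sq_nonneg (x - 1)]
    linarith
  have hmem : fMills (29/25) ∈ fMills '' Set.Ici 0 := ⟨29/25, by norm_num, rfl⟩
  have h2 : (0.346:ℝ) ≤ sSup (fMills '' Set.Ici 0) :=
    le_trans fMills_witness' (le_csSup hbdd hmem)
  refine ⟨h1, h2, ?_⟩
  have hsub : fMills '' Set.Icc 0 3 ⊆ fMills '' Set.Ici 0 :=
    Set.image_mono (fun x hx => hx.1)
  have hbdd2 : BddAbove (fMills '' Set.Icc 0 3) := hbdd.mono hsub
  have hmem2 : fMills (29/25) ∈ fMills '' Set.Icc 0 3 := ⟨29/25, by norm_num, rfl⟩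
  have hw2 : (0.346:ℝ) ≤ sSup (fMills '' Set.Icc 0 3) :=
    le_trans fMills_witness' (le_csSup hbdd2 hmem2)
  apply le_antisymm
  · apply csSup_le ⟨_, hmem⟩
    rintro y ⟨x, hx, rfl⟩
    by_cases hx3 : x ≤ 3
    · exact le_csSup hbdd2 ⟨x, ⟨hx, hx3⟩, rfl⟩
    · have hlt := h1 x (lt_of_not_ge hx3)
      calc fMills x ≤ 0.3 := hlt.le
        _ ≤ 0.346 := by norm_num
        _ ≤ _ := hw2
  · exact csSup_le_csSup hbdd ⟨_, hmem2⟩ hsub
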